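/- Let f be an entire function on ℂ, let E ⊂ ℂ be a set of points whose pairwise distances all exceed 2δ for some δ > 0, and let C > 0 be such that |f(z)| ≤ C/|z| for every z ∈ ℂ with dist(z, E) ≥ δ (and z ≠ 0). Then f is identically zero. -/

import Mathlib

/-- Let `f` be entire, `E ⊆ ℂ` a set whose points have pairwise
distances exceeding `2δ` for some `δ > 0`, and suppose `|f z| ≤ C / |z|` for every
`z ≠ 0` at distance at least `δ` from `E`.  Then `f ≡ 0`. -/
theorem entire_decaying_off_separated_set_eq_zero
    (f : ℂ → ℂ) (hf : Differentiable ℂ f)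
    (E : Set ℂ) (δ : ℝ) (hδ : 0 < δ)
    (hsep : ∀ e₁ ∈ E, ∀ e₂ ∈ E, e₁ ≠ e₂ → 2 * δ < dist e₁ e₂)
    (C : ℝ) (hC : 0 < C)
    (hbound : ∀ z : ℂ, z ≠ 0 → (∀ e ∈ E, δ ≤ dist z e) →
      ‖f z‖ ≤ C / ‖z‖) :
    ∀ z : ℂ, f z = 0 := by
  set g : ℂ → ℂ := fun z => z * f z with hg
  have hgd : Differentiable ℂ g := differentiable_id.mul hf
  -- bound on the "good" set
  have hgood : ∀ z : ℂ, (∀ e ∈ E, δ ≤ dist z e) → ‖g z‖ ≤ C := by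
    intro z hz
    rcases eq_or_ne z 0 with rfl | h0
    · simp [hg, hC.le]
    · have := hbound z h0 hz
      have habs : ‖z‖ ≠ 0 := by simpa using h0
      calc ‖g z‖ = ‖z‖ * ‖f z‖ := by
            simp [hg, map_mul]
        _ ≤ ‖z‖ * (C / ‖z‖) := by
            exact mul_le_mul_of_nonneg_left this (norm_nonneg z)
        _ = C := by field_simp
  -- bound everywhere
  have hbd : ∀ z : ℂ, ‖g z‖ ≤ C := by
    intro z
    by_cases hz : ∀ e ∈ E, δ ≤ dist z e
    · exact hgood z hz
    · push_neg at hz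
      obtain ⟨e, he, hlt⟩ := hz
      have : ‖g z‖ ≤ C := by
        apply Complex.norm_le_of_forall_mem_frontier_norm_le
          (Metric.isBounded_ball (x := e) (r := δ))
          (hgd.diffContOnCl)
        · intro w hw
          rw [frontier_ball e hδ.ne'] at hw
          have hwe : dist w e = δ := hw
          apply hgood
          intro e' he'
          rcases eq_or_ne e' e with rfl | hne
          · exact hwe.ge
          · have hsep' := hsep e' he' e he hne
            have : dist e' e ≤ dist e' w + dist w e := dist_triangle _ _ _
            have : δ ≤ dist e' w := by
              rw [hwe] at this; linarith
            rwa [dist_comm]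
        · exact subset_closure (Metric.mem_ball.2 hlt)
      exact this
  -- Liouville
  have hconst : ∀ z : ℂ, g z = g 0 := by
    intro z
    exact hgd.apply_eq_apply_of_bounded
      (Metric.isBounded_range_iff.2 ⟨2 * C, fun x y => by
        calc dist (g x) (g y) ≤ ‖g x‖ + ‖g y‖ := dist_le_norm_add_norm _ _
          _ ≤ 2 * C := by linarith [hbd x, hbd y]⟩) z 0
  have hgz : ∀ z : ℂ, g z = 0 := by
    intro z; rw [hconst z]; simp [hg]
  have hne : ∀ z : ℂ, z ≠ 0 → f z = 0 := by
    intro z h0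
    have := hgz z
    simpa [hg, h0] using this
  intro z
  rcases eq_or_ne z 0 with rfl | h0
  · -- continuity: f = 0 on dense set {0}ᶜ
    have : Filter.Tendsto f (nhdsWithin 0 {0}ᶜ) (nhds (f 0)) :=
      (hf.continuous.continuousAt).continuousWithinAt.tendsto
    have h2 : Filter.Tendsto f (nhdsWithin 0 {0}ᶜ) (nhds 0) := by
      apply Filter.Tendsto.congr' _ tendsto_const_nhds
      filter_upwards [self_mem_nhdsWithin] with w hw
      exact (hne w hw).symm
    have hNe : (nhdsWithin (0:ℂ) {0}ᶜ).NeBot := by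
      exact inferInstance
    exact tendsto_nhds_unique this h2
  · exact hne z h0
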